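/- arXiv:2001.06448 — 3 statements merged into one kernel-verified Lean document; each statement's English description precedes it below -/
import Mathlib

section
/- Let 𝒰 and 𝒱 be finite types, p a joint probability mass function on 𝒰 × 𝒱 with marginals p_U, p_V, and q a model joint probability mass function on 𝒰 × 𝒱 with marginals q_U, q_V, such that q(u,v) > 0 whenever p(u,v) > 0, q_U(u) > 0 whenever p_U(u) > 0, and q_V(v) > 0 whenever p_V(v) > 0. Then |CI(U,V) − I(U,V)| ≤ D(p‖q) + D(p_U‖q_U) + D(p_V‖q_V) ≤ 3·max(D(p‖q), D(p_U‖q_U), D(p_V‖q_V)). -/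
open Finset

/-- Mutual information `I(U,V)` of a joint pmf `p` on `U × V` with marginals `pU`, `pV`. -/
noncomputable def mutualInfo {U V : Type*} [Fintype U] [Fintype V]
    (p : U × V → ℝ) (pU : U → ℝ) (pV : V → ℝ) : ℝ :=
  ∑ uv : U × V, p uv * Real.log (p uv / (pU uv.1 * pV uv.2))

/-- Mutual cross-information `CI(U,V)`: expectation under `p` of the log density ratio
of the model joint `q` to the product of its marginals `qU`, `qV`. -/
noncomputable def crossInfo {U V : Type*} [Fintype U] [Fintype V]
    (p : U × V → ℝ) (q : U × V → ℝ) (qU : U → ℝ) (qV : V → ℝ) : ℝ :=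
  ∑ uv : U × V, p uv * Real.log (q uv / (qU uv.1 * qV uv.2))

/-- Kullback–Leibler divergence `D(p‖q)` between pmfs on a finite type. -/
noncomputable def klDiv {X : Type*} [Fintype X] (p q : X → ℝ) : ℝ :=
  ∑ x, p x * Real.log (p x / q x)


lemma klDiv_nonneg' {X : Type*} [Fintype X] (p q : X → ℝ)
    (hp0 : ∀ x, 0 ≤ p x) (hp1 : ∑ x, p x = 1)
    (hq0 : ∀ x, 0 ≤ q x) (hq1 : ∑ x, q x ≤ 1)
    (hpos : ∀ x, 0 < p x → 0 < q x) : 0 ≤ klDiv p q := by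
  have h : ∀ x ∈ univ, p x - q x ≤ p x * Real.log (p x / q x) := by
    intro x _
    rcases eq_or_lt_of_le (hp0 x) with h0 | h0
    · simp [← h0]; exact hq0 x
    · have hq := hpos x h0
      have hlog : Real.log (q x / p x) ≤ q x / p x - 1 :=
        Real.log_le_sub_one_of_pos (by positivity)
      have heq : Real.log (p x / q x) = - Real.log (q x / p x) := by
        rw [← Real.log_inv]; congr 1; field_simp
      rw [heq]
      have : q x / p x - 1 = (q x - p x) / p x := by field_simp
      rw [this] at hlog
      have hh := (le_div_iff₀ h0).mp hlog
      nlinarith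
  have := Finset.sum_le_sum h
  rw [Finset.sum_sub_distrib, hp1] at this
  unfold klDiv
  linarith

theorem abs_crossInfo_sub_mutualInfo_le {U V : Type*} [Fintype U] [Fintype V]
    (p q : U × V → ℝ) (pU qU : U → ℝ) (pV qV : V → ℝ)
    (hp0 : ∀ uv, 0 ≤ p uv) (hp1 : ∑ uv : U × V, p uv = 1)
    (hq0 : ∀ uv, 0 ≤ q uv) (hq1 : ∑ uv : U × V, q uv = 1)
    (hpU : ∀ u, pU u = ∑ v, p (u, v)) (hpV : ∀ v, pV v = ∑ u, p (u, v))
    (hqU : ∀ u, qU u = ∑ v, q (u, v)) (hqV : ∀ v, qV v = ∑ u, q (u, v))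
    (hqpos : ∀ uv, 0 < p uv → 0 < q uv)
    (hqUpos : ∀ u, 0 < pU u → 0 < qU u)
    (hqVpos : ∀ v, 0 < pV v → 0 < qV v) :
    |crossInfo p q qU qV - mutualInfo p pU pV| ≤
        klDiv p q + klDiv pU qU + klDiv pV qV ∧
      klDiv p q + klDiv pU qU + klDiv pV qV ≤
        3 * max (klDiv p q) (max (klDiv pU qU) (klDiv pV qV)) := by
  -- basic facts on marginals
  have hpU0 : ∀ u, 0 ≤ pU u := fun u => by
    rw [hpU]; exact Finset.sum_nonneg fun v _ => hp0 _
  have hpV0 : ∀ v, 0 ≤ pV v := fun v => by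
    rw [hpV]; exact Finset.sum_nonneg fun u _ => hp0 _
  have hqU0 : ∀ u, 0 ≤ qU u := fun u => by
    rw [hqU]; exact Finset.sum_nonneg fun v _ => hq0 _
  have hqV0 : ∀ v, 0 ≤ qV v := fun v => by
    rw [hqV]; exact Finset.sum_nonneg fun u _ => hq0 _
  have hpU1 : ∑ u, pU u = 1 := by
    rw [← hp1, Fintype.sum_prod_type]; exact Finset.sum_congr rfl fun u _ => (hpU u)
  have hpV1 : ∑ v, pV v = 1 := by
    rw [← hp1, Fintype.sum_prod_type_right]; exact Finset.sum_congr rfl fun v _ => (hpV v)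
  have hqU1 : ∑ u, qU u = 1 := by
    rw [← hq1, Fintype.sum_prod_type]; exact Finset.sum_congr rfl fun u _ => (hqU u)
  have hqV1 : ∑ v, qV v = 1 := by
    rw [← hq1, Fintype.sum_prod_type_right]; exact Finset.sum_congr rfl fun v _ => (hqV v)
  have hD : 0 ≤ klDiv p q :=
    klDiv_nonneg' p q hp0 hp1 hq0 (le_of_eq hq1) hqpos
  have hDU : 0 ≤ klDiv pU qU :=
    klDiv_nonneg' pU qU hpU0 hpU1 hqU0 (le_of_eq hqU1) hqUpos
  have hDV : 0 ≤ klDiv pV qV :=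
    klDiv_nonneg' pV qV hpV0 hpV1 hqV0 (le_of_eq hqV1) hqVpos
  -- key pointwise identity
  have key : ∀ uv : U × V,
      p uv * Real.log (q uv / (qU uv.1 * qV uv.2))
        - p uv * Real.log (p uv / (pU uv.1 * pV uv.2))
        + p uv * Real.log (p uv / q uv)
      = p uv * Real.log (pU uv.1 / qU uv.1) + p uv * Real.log (pV uv.2 / qV uv.2) := by
    rintro ⟨u, v⟩
    rcases eq_or_lt_of_le (hp0 (u, v)) with h0 | h0
    · simp [← h0]
    · have hq' : 0 < q (u, v) := hqpos _ h0
      have hpUu : 0 < pU u := by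
        rw [hpU]
        exact lt_of_lt_of_le h0 (Finset.single_le_sum (fun v _ => hp0 (u, v)) (mem_univ v))
      have hpVv : 0 < pV v := by
        rw [hpV]
        exact lt_of_lt_of_le h0 (Finset.single_le_sum (fun u _ => hp0 (u, v)) (mem_univ u))
      have hqUu : 0 < qU u := hqUpos u hpUu
      have hqVv : 0 < qV v := hqVpos v hpVv
      rw [Real.log_div h0.ne' (by positivity), Real.log_div hq'.ne' (by positivity),
        Real.log_div h0.ne' hq'.ne', Real.log_div hpUu.ne' hqUu.ne',
        Real.log_div hpVv.ne' hqVv.ne', Real.log_mul hqUu.ne' hqVv.ne',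
        Real.log_mul hpUu.ne' hpVv.ne']
      ring
  have hsumU : ∑ uv : U × V, p uv * Real.log (pU uv.1 / qU uv.1) = klDiv pU qU := by
    unfold klDiv
    rw [Fintype.sum_prod_type]
    refine Finset.sum_congr rfl fun u _ => ?_
    dsimp only
    rw [← Finset.sum_mul, ← hpU]
  have hsumV : ∑ uv : U × V, p uv * Real.log (pV uv.2 / qV uv.2) = klDiv pV qV := by
    unfold klDiv
    rw [Fintype.sum_prod_type_right]
    refine Finset.sum_congr rfl fun v _ => ?_
    dsimp only
    rw [← Finset.sum_mul, ← hpV]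
  have main : crossInfo p q qU qV - mutualInfo p pU pV + klDiv p q
      = klDiv pU qU + klDiv pV qV := by
    rw [← hsumU, ← hsumV]
    unfold crossInfo mutualInfo klDiv
    rw [← Finset.sum_sub_distrib, ← Finset.sum_add_distrib, ← Finset.sum_add_distrib]
    exact Finset.sum_congr rfl fun uv _ => key uv
  constructor
  · rw [abs_le]
    constructor <;> linarith
  · have h1 := le_max_left (klDiv p q) (max (klDiv pU qU) (klDiv pV qV))
    have h2 := le_trans (le_max_left (klDiv pU qU) (klDiv pV qV))
      (le_max_right (klDiv p q) _)
    have h3 := le_trans (le_max_right (klDiv pU qU) (klDiv pV qV))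
      (le_max_right (klDiv p q) _)
    linarith
end

section
/- Let 𝒰 and 𝒱 be finite types and p a joint probability mass function on 𝒰 × 𝒱 with marginals p_U, p_V. Let q_U be a probability mass function on 𝒰 with q_U(u) > 0 whenever p_U(u) > 0, and define the model joint q(u,v) := q_U(u)·p(v|u), where p(v|u) := p(u,v)/p_U(u) is the true conditional (for p_U(u) > 0), with model marginal q_V(v) := Σ_u q_U(u)·p(v|u); assume q_V(v) > 0 whenever p_V(v) > 0. Then CI(U,V) = I(U,V) + D(p_V‖q_V); in particular I(U,V) ≤ CI(U,V), with equality if and only if q_V = p_V. -/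
open Finset

lemma gibbs_term_aux {a b : ℝ} (ha : 0 ≤ a) (hb : 0 ≤ b) (hab : 0 < a → 0 < b) :
    a - b ≤ a * Real.log (a / b) ∧ (a * Real.log (a / b) = a - b → a = b) := by
  rcases eq_or_lt_of_le ha with h | h
  · refine ⟨by simp [← h]; linarith, ?_⟩
    intro he
    simp [← h] at he ⊢
    linarith
  · have hb' := hab h
    rcases eq_or_ne a b with heq | hne
    · subst heq; simp [div_self (ne_of_gt h)]
    · have hx : 0 < b / a := div_pos hb' h
      have hx1 : b / a ≠ 1 := by
        intro hc
        exact hne ((div_eq_one_iff_eq (ne_of_gt h)).mp hc).symm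
      have hlt : Real.log (b / a) < b / a - 1 := Real.log_lt_sub_one_of_pos hx hx1
      have hlog : Real.log (a / b) = - Real.log (b / a) := by
        rw [← Real.log_inv]; congr 1; rw [inv_div]
      have hstrict : a - b < a * Real.log (a / b) := by
        rw [hlog]
        have := mul_lt_mul_of_pos_left hlt h
        have hba : a * (b / a - 1) = b - a := by field_simp
        nlinarith
      exact ⟨le_of_lt hstrict, fun he => absurd he (by linarith)⟩

theorem mutualInfo_le_crossInfo_of_exact_conditional {U V : Type*} [Fintype U] [Fintype V]
    (p : U × V → ℝ) (pU : U → ℝ) (pV : V → ℝ)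
    (hp0 : ∀ uv, 0 ≤ p uv) (hp1 : ∑ uv : U × V, p uv = 1)
    (hpU : ∀ u, pU u = ∑ v, p (u, v)) (hpV : ∀ v, pV v = ∑ u, p (u, v))
    (qU : U → ℝ) (hqU0 : ∀ u, 0 ≤ qU u) (hqU1 : ∑ u, qU u = 1)
    (hqUpos : ∀ u, 0 < pU u → 0 < qU u)
    (q : U × V → ℝ) (hq : ∀ uv : U × V, q uv = qU uv.1 * (p uv / pU uv.1))
    (qV : V → ℝ) (hqV : ∀ v, qV v = ∑ u, qU u * (p (u, v) / pU u))
    (hqVpos : ∀ v, 0 < pV v → 0 < qV v) :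
    crossInfo p q qU qV = mutualInfo p pU pV + klDiv pV qV ∧
      mutualInfo p pU pV ≤ crossInfo p q qU qV ∧
      (crossInfo p q qU qV = mutualInfo p pU pV ↔ qV = pV) := by
  have hpU0 : ∀ u, 0 ≤ pU u := fun u => (hpU u) ▸ Finset.sum_nonneg fun v _ => hp0 _
  have hpV0 : ∀ v, 0 ≤ pV v := fun v => (hpV v) ▸ Finset.sum_nonneg fun u _ => hp0 _
  have hpUpos : ∀ u v, 0 < p (u, v) → 0 < pU u := by
    intro u v h
    have : p (u, v) ≤ pU u :=
      (hpU u) ▸ Finset.single_le_sum (fun v' _ => hp0 (u, v')) (mem_univ v)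
    linarith
  have hpVpos : ∀ u v, 0 < p (u, v) → 0 < pV v := by
    intro u v h
    have : p (u, v) ≤ pV v :=
      (hpV v) ▸ Finset.single_le_sum (fun u' _ => hp0 (u', v)) (mem_univ u)
    linarith
  have hqV0 : ∀ v, 0 ≤ qV v := by
    intro v
    rw [hqV]
    exact Finset.sum_nonneg fun u _ =>
      mul_nonneg (hqU0 u) (div_nonneg (hp0 _) (hpU0 u))
  -- key termwise identity
  have key : crossInfo p q qU qV
      = mutualInfo p pU pV + ∑ uv : U × V, p uv * Real.log (pV uv.2 / qV uv.2) := by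
    rw [crossInfo, mutualInfo, ← Finset.sum_add_distrib]
    apply Finset.sum_congr rfl
    intro uv _
    rcases eq_or_lt_of_le (hp0 uv) with h | h
    · simp [← h]
    · obtain ⟨u, v⟩ := uv
      have hpu := hpUpos u v h
      have hpv := hpVpos u v h
      have hqu := hqUpos u hpu
      have hqv := hqVpos v hpv
      rw [hq]
      have h1 : qU (u, v).1 * (p (u, v) / pU (u, v).1) / (qU (u, v).1 * qV (u, v).2)
          = (p (u, v) / (pU u * pV v)) * (pV v / qV v) := by
        field_simp
      rw [h1, Real.log_mul (by positivity) (by positivity), mul_add]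
  -- the extra sum equals klDiv pV qV
  have hsum2 : (∑ uv : U × V, p uv * Real.log (pV uv.2 / qV uv.2)) = klDiv pV qV := by
    rw [klDiv, Fintype.sum_prod_type_right]
    apply Finset.sum_congr rfl
    intro v _
    show ∑ u : U, p (u, v) * Real.log (pV v / qV v) = _
    rw [← Finset.sum_mul, ← hpV]
  have keyD : crossInfo p q qU qV = mutualInfo p pU pV + klDiv pV qV := by
    rw [key, hsum2]
  -- sum of pV is 1
  have hpV1 : ∑ v, pV v = 1 := by
    simp_rw [hpV]
    rw [← Fintype.sum_prod_type_right] at *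
    exact hp1
  -- sum of qV ≤ 1
  have hqV1 : ∑ v, qV v ≤ 1 := by
    have : ∑ v, qV v = ∑ u, qU u * ((∑ v, p (u, v)) / pU u) := by
      simp_rw [hqV]
      rw [Finset.sum_comm]
      apply Finset.sum_congr rfl
      intro u _
      rw [Finset.sum_div, ← Finset.mul_sum]
    rw [this, ← hqU1]
    apply Finset.sum_le_sum
    intro u _
    rcases eq_or_lt_of_le (hpU0 u) with h | h
    · rw [← hpU u, ← h]
      simp
      exact hqU0 u
    · rw [← hpU u, div_self (ne_of_gt h), mul_one]
  -- Gibbs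
  have hterm := fun v => gibbs_term_aux (hpV0 v) (hqV0 v) (hqVpos v)
  have hD0 : 0 ≤ klDiv pV qV := by
    have : ∑ v, (pV v - qV v) ≤ klDiv pV qV :=
      Finset.sum_le_sum fun v _ => (hterm v).1
    rw [Finset.sum_sub_distrib, hpV1] at this
    linarith
  have hDiff : klDiv pV qV = 0 ↔ qV = pV := by
    constructor
    · intro hD
      have hsum0 : ∑ v, (pV v * Real.log (pV v / qV v) - (pV v - qV v)) = ∑ qv, qV qv - 1 := by
        rw [Finset.sum_sub_distrib, Finset.sum_sub_distrib, hpV1, ← klDiv, hD]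
        ring
      have hnn : ∀ v ∈ univ, 0 ≤ pV v * Real.log (pV v / qV v) - (pV v - qV v) :=
        fun v _ => by linarith [(hterm v).1]
      have hle : (0:ℝ) ≤ ∑ qv, qV qv - 1 := hsum0 ▸ Finset.sum_nonneg hnn
      have hq1 : ∑ qv, qV qv - 1 = 0 := by linarith
      rw [hq1] at hsum0
      have hz := (Finset.sum_eq_zero_iff_of_nonneg hnn).mp hsum0
      funext v
      have := hz v (mem_univ v)
      exact ((hterm v).2 (by linarith)).symm
    · intro hE
      rw [klDiv]
      apply Finset.sum_eq_zero
      intro v _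
      rcases eq_or_lt_of_le (hpV0 v) with h | h
      · rw [← h, zero_mul]
      · rw [hE, div_self (ne_of_gt h), Real.log_one, mul_zero]
  refine ⟨keyD, by linarith [keyD, hD0], ?_⟩
  rw [keyD]
  constructor
  · intro h
    exact hDiff.mp (by linarith)
  · intro h
    rw [hDiff.mpr h]
    ring
end

section
/- Let d ≥ 1, σ > 0, Δ > 0, let ι be a finite nonempty index type, let w : ι → EuclideanSpace ℝ (Fin d) be points satisfying ‖w i − w j‖ ≥ Δ for all i ≠ j, and let P : ι → ℝ be nonnegative weights with Σ_i P i = 1. For each j define the dequantized probability estimate Q̃ j := Σ_i P i · exp(−‖w j − w i‖² / (2σ²)) (this equals (Σ_i P i · N(w j − w i; 0, σ²I)) / N(0; 0, σ²I), since the Gaussian normalization constant (2πσ²)^{−d/2} cancels). Then for every j: P j ≤ Q̃ j ≤ P j + (1 − P j)·exp(−Δ² / (2σ²)); in particular the dequantization error ΔP j := Q̃ j − P j satisfies 0 ≤ ΔP j ≤ exp(−Δ² / (2σ²)). -/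
open Finset

/-- Error bound for Gaussian dequantization: if quantization grid points `w i` are
separated by at least `Δ`, then the dequantized probability estimate
`Q̃ j = ∑ i, P i · exp(−‖w j − w i‖²/(2σ²))` satisfies
`P j ≤ Q̃ j ≤ P j + (1 − P j)·exp(−Δ²/(2σ²))`, so the dequantization error is
between `0` and `exp(−Δ²/(2σ²))`. -/
theorem gaussian_dequantization_error_bound
    {d : ℕ} (hd : 1 ≤ d) (σ Δ : ℝ) (hσ : 0 < σ) (hΔ : 0 < Δ)
    {ι : Type*} [Fintype ι] [Nonempty ι]
    (w : ι → EuclideanSpace ℝ (Fin d))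
    (hsep : ∀ i j : ι, i ≠ j → Δ ≤ ‖w i - w j‖)
    (P : ι → ℝ) (hP0 : ∀ i, 0 ≤ P i) (hP1 : ∑ i, P i = 1)
    (Q : ι → ℝ)
    (hQ : ∀ j, Q j = ∑ i, P i * Real.exp (-‖w j - w i‖ ^ 2 / (2 * σ ^ 2))) :
    ∀ j, P j ≤ Q j ∧ Q j ≤ P j + (1 - P j) * Real.exp (-Δ ^ 2 / (2 * σ ^ 2)) ∧
      0 ≤ Q j - P j ∧ Q j - P j ≤ Real.exp (-Δ ^ 2 / (2 * σ ^ 2)) := by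
  intro j
  classical
  set E := Real.exp (-Δ ^ 2 / (2 * σ ^ 2)) with hE
  have hE1 : E ≤ 1 := by
    rw [hE]
    apply Real.exp_le_one_iff.mpr
    apply div_nonpos_of_nonpos_of_nonneg
    · simpa using sq_nonneg Δ
    · positivity
  have hE0 : 0 ≤ E := Real.exp_nonneg _
  have hPj1 : P j ≤ 1 := by
    rw [← hP1]
    exact Finset.single_le_sum (fun i _ => hP0 i) (mem_univ j)
  have hsplit : Q j = P j + ∑ i ∈ univ.erase j,
      P i * Real.exp (-‖w j - w i‖ ^ 2 / (2 * σ ^ 2)) := by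
    rw [hQ, ← Finset.add_sum_erase _ _ (mem_univ j)]
    simp
  have hsum_erase : ∑ i ∈ univ.erase j, P i = 1 - P j := by
    have := Finset.add_sum_erase univ P (mem_univ j)
    rw [hP1] at this
    linarith
  have hterm_nonneg : ∀ i ∈ univ.erase j,
      0 ≤ P i * Real.exp (-‖w j - w i‖ ^ 2 / (2 * σ ^ 2)) := by
    intro i _
    exact mul_nonneg (hP0 i) (Real.exp_nonneg _)
  have hlow : P j ≤ Q j := by
    rw [hsplit]
    have := Finset.sum_nonneg hterm_nonneg
    linarith
  have hup : Q j ≤ P j + (1 - P j) * E := by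
    rw [hsplit]
    have : ∑ i ∈ univ.erase j, P i * Real.exp (-‖w j - w i‖ ^ 2 / (2 * σ ^ 2))
        ≤ ∑ i ∈ univ.erase j, P i * E := by
      apply Finset.sum_le_sum
      intro i hi
      have hij : j ≠ i := fun h => (Finset.mem_erase.mp hi).1 h.symm
      apply mul_le_mul_of_nonneg_left _ (hP0 i)
      rw [hE]
      apply Real.exp_le_exp.mpr
      apply div_le_div_of_nonneg_right _ (by positivity)
      have h1 : Δ ≤ ‖w j - w i‖ := hsep j i hij
      nlinarith [sq_nonneg (‖w j - w i‖ - Δ)]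
    rw [← Finset.sum_mul, hsum_erase] at this
    linarith
  have h1P : 0 ≤ 1 - P j := by linarith
  refine ⟨hlow, hup, by linarith, ?_⟩
  have : (1 - P j) * E ≤ 1 * E := mul_le_mul_of_nonneg_right (by linarith [hP0 j]) hE0
  linarith
end
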